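/- Let s ∈ [0,T] and let Z_T ∈ L¹(K_T*;F_T,P). Then E_P[ esssup_{η ∈ A_{s,T} ∩ L_b⁰} E_P[η·Z_T | F_s] ] = sup_{η ∈ A_{s,T} ∩ L_b⁰} E_P[η·Z_T]. -/

import Mathlib

open MeasureTheory Filter Set

noncomputable section

namespace TransactionCosts

variable {Ω : Type*} [m0 : MeasurableSpace Ω]

/-- Market data: a filtered probability space satisfying (versions of) the usual
conditions, a strictly positive càdlàg adapted integrable price process `S` on `[0,T]`,
and proportional transaction costs `lam ∈ (0,1)`. -/
structure Market (Ω : Type*) [m0 : MeasurableSpace Ω] where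
  P : Measure Ω
  probP : IsProbabilityMeasure P
  F : Filtration ℝ m0
  T : ℝ
  T_pos : 0 < T
  F_rightCont : ∀ t : ℝ,
    (F t : MeasurableSpace Ω) = ⨅ u : {u : ℝ // t < u}, (F u.1 : MeasurableSpace Ω)
  F0_trivial : ∀ A : Set Ω, MeasurableSet[F 0] A → P A = 0 ∨ P A = 1
  FT_full : (F T : MeasurableSpace Ω) = m0
  S : ℝ → Ω → ℝ
  S_adapted : ∀ t : ℝ, StronglyMeasurable[F t] (S t)
  S_pos : ∀ t ω, 0 < S t ω
  S_rightCont : ∀ ω t, ContinuousWithinAt (fun u => S u ω) (Ici t) t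
  S_leftLim : ∀ ω t, ∃ l : ℝ, Tendsto (fun u => S u ω) (nhdsWithin t (Iio t)) (nhds l)
  S_int : ∀ t : ℝ, Integrable (S t) P
  lam : ℝ
  lam_pos : 0 < lam
  lam_lt_one : lam < 1

/-- Generators of the predictable σ-algebra: stochastic intervals `(a,b] × A`, `A ∈ F_a`. -/
def predictableSets (F : Filtration ℝ m0) : Set (Set (ℝ × Ω)) :=
  {E | ∃ (a b : ℝ) (A : Set Ω), MeasurableSet[F a] A ∧ E = Ioc a b ×ˢ A}

/-- A process is predictable if it is measurable for the predictable σ-algebra. -/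
def Predictable (F : Filtration ℝ m0) (f : ℝ → Ω → ℝ) : Prop :=
  Measurable[MeasurableSpace.generateFrom (predictableSets F)] (Function.uncurry f)

/-- `f` is a martingale under `Q` on the time interval `[s,t]`. -/
def MartingaleOn (F : Filtration ℝ m0) (Q : Measure Ω) (f : ℝ → Ω → ℝ) (s t : ℝ) : Prop :=
  (∀ u ∈ Icc s t, StronglyMeasurable[F u] (f u)) ∧
  (∀ u ∈ Icc s t, Integrable (f u) Q) ∧
  ∀ u ∈ Icc s t, ∀ v ∈ Icc s t, u ≤ v →
    MeasureTheory.condExp (F u) Q (f v) =ᵐ[Q] f u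

/-- The process `f` stopped at the stopping time `τ ∨ s`. -/
def stoppedAt (f : ℝ → Ω → ℝ) (s : ℝ) (τ : Ω → ℝ) : ℝ → Ω → ℝ :=
  fun u ω => f (min u (max s (τ ω))) ω

/-- `f` is a local martingale under `Q` on the time interval `[s,t]`. -/
def LocalMartingaleOn (F : Filtration ℝ m0) (Q : Measure Ω) (f : ℝ → Ω → ℝ) (s t : ℝ) :
    Prop :=
  (∀ u ∈ Icc s t, StronglyMeasurable[F u] (f u)) ∧
  ∃ τ : ℕ → Ω → ℝ, (∀ n, IsStoppingTime F (fun ω => ((τ n ω : ℝ) : WithTop ℝ))) ∧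
    (∀ n ω, τ n ω ≤ τ (n + 1) ω) ∧
    (∀ᵐ ω ∂Q, ∃ N : ℕ, ∀ n ≥ N, t ≤ τ n ω) ∧
    ∀ n, MartingaleOn F Q (stoppedAt f s (τ n)) s t

/-- `(Q, Stil)` is a consistent price system on `[s,t]` for transaction costs `lam'`. -/
def IsCPS (M : Market Ω) (lam' s t : ℝ) (Q : Measure Ω) (Stil : ℝ → Ω → ℝ) : Prop :=
  IsProbabilityMeasure Q ∧ Q ≪ M.P ∧ M.P ≪ Q ∧
  MartingaleOn M.F Q Stil s t ∧
  ∀ u ∈ Icc s t, ∀ᵐ ω ∂M.P,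
    (1 - lam') * M.S u ω ≤ Stil u ω ∧ Stil u ω ≤ (1 + lam') * M.S u ω

/-- `(Q, Stil)` is a consistent local price system on `[s,t]` for transaction costs `lam'`. -/
def IsLocalCPS (M : Market Ω) (lam' s t : ℝ) (Q : Measure Ω) (Stil : ℝ → Ω → ℝ) : Prop :=
  IsProbabilityMeasure Q ∧ Q ≪ M.P ∧ M.P ≪ Q ∧
  LocalMartingaleOn M.F Q Stil s t ∧
  ∀ u ∈ Icc s t, ∀ᵐ ω ∂M.P,
    (1 - lam') * M.S u ω ≤ Stil u ω ∧ Stil u ω ≤ (1 + lam') * M.S u ω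

/-- `CPS(s,T)`, as a set of pairs. -/
def CPS (M : Market Ω) (s : ℝ) : Set (Measure Ω × (ℝ → Ω → ℝ)) :=
  {p | IsCPS M M.lam s M.T p.1 p.2}

/-- `CPS_loc(s,T)`, as a set of pairs. -/
def CPSloc (M : Market Ω) (s : ℝ) : Set (Measure Ω × (ℝ → Ω → ℝ)) :=
  {p | IsLocalCPS M M.lam s M.T p.1 p.2}

/-- The set `Q(s,T)` of measures occurring in consistent price systems. -/
def Qset (M : Market Ω) (s : ℝ) : Set (Measure Ω) :=
  {Q | ∃ Stil, IsCPS M M.lam s M.T Q Stil}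

/-- The set `Q_loc(s,T)` of measures occurring in consistent local price systems. -/
def QsetLoc (M : Market Ω) (s : ℝ) : Set (Measure Ω) :=
  {Q | ∃ Stil, IsLocalCPS M M.lam s M.T Q Stil}

/-- `X ∈ L¹(F_s, Q)` : `F_s`-measurable and integrable under every `Q ∈ Q(s,T)`. -/
def MemL1Q (M : Market Ω) (s : ℝ) (X : Ω → ℝ) : Prop :=
  StronglyMeasurable[M.F s] X ∧ ∀ Q ∈ Qset M s, Integrable X Q

/-- `X ∈ L¹₊(F_s, Q)`. -/
def MemL1plusQ (M : Market Ω) (s : ℝ) (X : Ω → ℝ) : Prop :=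
  MemL1Q M s X ∧ ∀ᵐ ω ∂M.P, 0 ≤ X ω

/-- `X ∈ L^∞(F_s, Q)` : `F_s`-measurable and (essentially) bounded. -/
def MemLinfQ (M : Market Ω) (s : ℝ) (X : Ω → ℝ) : Prop :=
  StronglyMeasurable[M.F s] X ∧ ∃ C : ℝ, ∀ᵐ ω ∂M.P, |X ω| ≤ C

/-- `X ∈ L^∞₊(F_s, Q)`. -/
def MemLinfplusQ (M : Market Ω) (s : ℝ) (X : Ω → ℝ) : Prop :=
  MemLinfQ M s X ∧ ∀ᵐ ω ∂M.P, 0 ≤ X ω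

/-- `X ∈ L¹(F_s, Q_loc)`. -/
def MemL1Qloc (M : Market Ω) (s : ℝ) (X : Ω → ℝ) : Prop :=
  StronglyMeasurable[M.F s] X ∧ ∀ Q ∈ QsetLoc M s, Integrable X Q

/-- `X ∈ L¹₊(F_s, Q_loc)`. -/
def MemL1plusQloc (M : Market Ω) (s : ℝ) (X : Ω → ℝ) : Prop :=
  MemL1Qloc M s X ∧ ∀ᵐ ω ∂M.P, 0 ≤ X ω

/-- The solvency cone `K_t(ω)`, generated by `(1+λ)S e₁ - e₂` and `-e₁ + e₂/((1-λ)S)`. -/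
def solvCone (lam St : ℝ) : Set (ℝ × ℝ) :=
  {x | ∃ a b : ℝ, 0 ≤ a ∧ 0 ≤ b ∧
    x = (a * ((1 + lam) * St) - b, -a + b / ((1 - lam) * St))}

/-- The (positive) polar cone `{y : ⟨x,y⟩ ≥ 0 ∀ x ∈ C}`. -/
def polarCone (C : Set (ℝ × ℝ)) : Set (ℝ × ℝ) :=
  {y | ∀ x ∈ C, 0 ≤ x.1 * y.1 + x.2 * y.2}

/-- Euclidean inner product on `ℝ²`. -/
def dot (x y : ℝ × ℝ) : ℝ := x.1 * y.1 + x.2 * y.2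

/-- `Z ∈ L¹(K_T^*; F_T, P)`. -/
def MemL1Polar (M : Market Ω) (Z : Ω → ℝ × ℝ) : Prop :=
  AEStronglyMeasurable Z M.P ∧ Integrable (fun ω => (Z ω).1) M.P ∧
  Integrable (fun ω => (Z ω).2) M.P ∧
  ∀ᵐ ω ∂M.P, Z ω ∈ polarCone (solvCone M.lam (M.S M.T ω))

/-- Liquidation value at time `t` of the position `x = (x¹, x²)`. -/
def liq (M : Market Ω) (t : ℝ) (x : ℝ × ℝ) (ω : Ω) : ℝ :=
  x.1 + max x.2 0 * ((1 - M.lam) * M.S t ω) - max (-x.2) 0 * ((1 + M.lam) * M.S t ω)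

/-- `φ ⪰ ψ` : the portfolio `φ - ψ` can be liquidated to the zero portfolio at time `T`. -/
def Succeq (M : Market Ω) (φ ψ : Ω → ℝ × ℝ) : Prop :=
  ∀ᵐ ω ∂M.P, 0 ≤ liq M M.T (φ ω - ψ ω) ω

/-- A self-financing trading strategy on `[s,T]`: predictable, of finite variation, with
the Jordan–Hahn decompositions (encoded by the pathwise measures `μ1u, μ1d, μ2u, μ2d`)
satisfying `dφ¹ ≤ (1-λ)S dφ^{2,↓} - (1+λ)S dφ^{2,↑}`. -/
def IsSelfFinancing (M : Market Ω) (s : ℝ) (φ : ℝ → Ω → ℝ × ℝ) : Prop :=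
  Predictable M.F (fun t ω => (φ t ω).1) ∧ Predictable M.F (fun t ω => (φ t ω).2) ∧
  ∃ μ1u μ1d μ2u μ2d : Ω → Measure ℝ,
    (∀ ω, IsFiniteMeasure (μ1u ω)) ∧ (∀ ω, IsFiniteMeasure (μ1d ω)) ∧
    (∀ ω, IsFiniteMeasure (μ2u ω)) ∧ (∀ ω, IsFiniteMeasure (μ2d ω)) ∧
    (∀ ω, ∀ t ∈ Icc s M.T,
      (φ t ω).1 = (φ s ω).1 + (μ1u ω (Ioc s t)).toReal - (μ1d ω (Ioc s t)).toReal ∧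
      (φ t ω).2 = (φ s ω).2 + (μ2u ω (Ioc s t)).toReal - (μ2d ω (Ioc s t)).toReal) ∧
    ∀ ω, ∀ E : Set ℝ, MeasurableSet E → E ⊆ Icc s M.T →
      (μ1u ω E).toReal + ∫ t in E, (1 + M.lam) * M.S t ω ∂(μ2u ω) ≤
      (μ1d ω E).toReal + ∫ t in E, (1 - M.lam) * M.S t ω ∂(μ2d ω)

/-- Liquidation value of the strategy `φ` at the random time `τ`. -/
def liqAtTime (M : Market Ω) (τ : Ω → ℝ) (φ : ℝ → Ω → ℝ × ℝ) (ω : Ω) : ℝ :=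
  liq M (τ ω) (φ (τ ω) ω) ω

/-- `(M1, M2)`-admissibility in the numéraire-free sense. -/
def AdmissibleNFWith (M : Market Ω) (s : ℝ) (M1 M2 : Ω → ℝ) (φ : ℝ → Ω → ℝ × ℝ) : Prop :=
  ∀ τ : Ω → ℝ, IsStoppingTime M.F (fun ω => ((τ ω : ℝ) : WithTop ℝ)) → (∀ ω, τ ω ∈ Icc s M.T) →
    ∀ᵐ ω ∂M.P, -M1 ω - M2 ω * M.S (τ ω) ω ≤ liqAtTime M τ φ ω

/-- Admissibility in the numéraire-free sense. -/
def AdmissibleNF (M : Market Ω) (s : ℝ) (φ : ℝ → Ω → ℝ × ℝ) : Prop :=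
  ∃ M1 M2 : Ω → ℝ, MemL1plusQ M s M1 ∧ MemLinfplusQ M s M2 ∧
    AdmissibleNFWith M s M1 M2 φ

/-- `Ms`-admissibility in the numéraire-based sense. -/
def AdmissibleNBWith (M : Market Ω) (s : ℝ) (Ms : Ω → ℝ) (φ : ℝ → Ω → ℝ × ℝ) : Prop :=
  ∀ τ : Ω → ℝ, IsStoppingTime M.F (fun ω => ((τ ω : ℝ) : WithTop ℝ)) → (∀ ω, τ ω ∈ Icc s M.T) →
    ∀ᵐ ω ∂M.P, -Ms ω ≤ liqAtTime M τ φ ω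

/-- Admissibility in the numéraire-based sense. -/
def AdmissibleNB (M : Market Ω) (s : ℝ) (φ : ℝ → Ω → ℝ × ℝ) : Prop :=
  ∃ Ms : Ω → ℝ, MemL1plusQloc M s Ms ∧ AdmissibleNBWith M s Ms φ

/-- The set `A_{s,T}` of terminal values of admissible (numéraire-free) self-financing
strategies starting from the zero endowment. -/
def Aset (M : Market Ω) (s : ℝ) : Set (Ω → ℝ × ℝ) :=
  {X | ∃ φ : ℝ → Ω → ℝ × ℝ, IsSelfFinancing M s φ ∧ (∀ ω, φ s ω = 0) ∧
    AdmissibleNF M s φ ∧ ∀ ω, φ M.T ω = X ω}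

/-- The cone `L⁰_{1,∞}`. -/
def L01inf (M : Market Ω) (s : ℝ) : Set (Ω → ℝ × ℝ) :=
  {ξ | ∃ M1 M2 : Ω → ℝ, MemL1plusQ M s M1 ∧ MemLinfplusQ M s M2 ∧
    Succeq M ξ (fun ω => (-M1 ω, -M2 ω))}

/-- The cone `L_b⁰`. -/
def Lb0 (M : Market Ω) : Set (Ω → ℝ × ℝ) :=
  {ξ | ∃ c : ℝ, 0 < c ∧ Succeq M ξ (fun _ => (-c, -c))}

/-- `g` is (a version of) the essential supremum of the family `(f i)_{i ∈ A}` under `P`. -/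
def IsEssSupOn {ι : Type*} (P : Measure Ω) (A : Set ι) (f : ι → Ω → ℝ) (g : Ω → ℝ) : Prop :=
  (∀ i ∈ A, f i ≤ᵐ[P] g) ∧ ∀ h : Ω → ℝ, (∀ i ∈ A, f i ≤ᵐ[P] h) → g ≤ᵐ[P] h

/-- `g` is (a version of) the essential infimum of the family `(f i)_{i ∈ A}` under `P`. -/
def IsEssInfOn {ι : Type*} (P : Measure Ω) (A : Set ι) (f : ι → Ω → ℝ) (g : Ω → ℝ) : Prop :=
  (∀ i ∈ A, g ≤ᵐ[P] f i) ∧ ∀ h : Ω → ℝ, (∀ i ∈ A, h ≤ᵐ[P] f i) → h ≤ᵐ[P] g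

/-- The payoff `X_T¹ + X_T² S̃_T` of the claim `X_T` under the price system `Stil`. -/
def payoff (M : Market Ω) (XT : Ω → ℝ × ℝ) (Stil : ℝ → Ω → ℝ) : Ω → ℝ :=
  fun ω => (XT ω).1 + (XT ω).2 * Stil M.T ω

/-- The process `F^Q_t = E_Q[X_T¹ + X_T² S̃_T | F_t]`. -/
def FQ (M : Market Ω) (XT : Ω → ℝ × ℝ) (p : Measure Ω × (ℝ → Ω → ℝ)) (t : ℝ) : Ω → ℝ :=
  MeasureTheory.condExp (M.F t) p.1 (payoff M XT p.2)

/-- The value of `F^Q` at the random time `τ`. -/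
def FQat (M : Market Ω) (XT : Ω → ℝ × ℝ) (p : Measure Ω × (ℝ → Ω → ℝ)) (τ : Ω → ℝ)
    (ω : Ω) : ℝ :=
  FQ M XT p (τ ω) ω

/-- Assumption: `S` admits a consistent local price system for every `0 < λ' ≤ λ`. -/
def Assumption1 (M : Market Ω) : Prop :=
  ∀ lam' : ℝ, 0 < lam' → lam' ≤ M.lam → ∃ Q Stil, IsLocalCPS M lam' 0 M.T Q Stil

/-- Assumption: `S` admits a consistent price system for every `0 < λ' ≤ λ`. -/
def Assumption2 (M : Market Ω) : Prop :=
  ∀ lam' : ℝ, 0 < lam' → lam' ≤ M.lam → ∃ Q Stil, IsCPS M lam' 0 M.T Q Stil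

/-- `σ̂ n` for `n ∈ ℕ ∪ {∞}` : the stopping time `σ_n`, resp. the limit `σ` for `n = ∞`. -/
def sigmaHat (σ : ℕ → Ω → ℝ) (σ' : Ω → ℝ) (n : WithTop ℕ) : Ω → ℝ :=
  fun ω => if n = ⊤ then σ' ω else σ (WithTop.untopD 0 n) ω

/-- Assumption A3 (local case), relative to the claim `XT` and the super-replication
price process `Fproc`. -/
def AssumptionA3 (M : Market Ω) (s : ℝ) (XT : Ω → ℝ × ℝ) (Fproc : ℝ → Ω → ℝ) : Prop :=
  ∃ Q0 ∈ QsetLoc M s,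
    ∀ (σ : ℕ → Ω → ℝ) (σ' : Ω → ℝ),
      (∀ n, IsStoppingTime M.F (fun ω => ((σ n ω : ℝ) : WithTop ℝ))) →
      (∀ n ω, σ n ω ∈ Icc 0 M.T) →
      (∀ n ω, σ (n + 1) ω ≤ σ n ω) →
      (∀ ω, Tendsto (fun n => σ n ω) atTop (nhds (σ' ω))) →
      ∃ pSeq : WithTop ℕ → ℕ → Measure Ω × (ℝ → Ω → ℝ),
        (∀ n k, IsLocalCPS M M.lam 0 M.T (pSeq n k).1 (pSeq n k).2) ∧
        (∀ ε : ℝ, 0 < ε → ∃ K : ℕ, ∀ k : ℕ, K ≤ k → ∀ n : WithTop ℕ,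
          |(∫ ω, FQat M XT (pSeq n k) (sigmaHat σ σ' n) ω ∂Q0) -
            ∫ ω, Fproc (sigmaHat σ σ' n ω) ω ∂Q0| < ε) ∧
        (∀ ε : ℝ, 0 < ε → ∀ k : ℕ,
          Q0 (⋃ N : ℕ, {ω | ∀ n : ℕ, N ≤ n → ∀ n0 : WithTop ℕ,
            |FQat M XT (pSeq n0 k) (σ n) ω - FQat M XT (pSeq n0 k) σ' ω| < ε}) = 1)

/-- Assumption A4 (non-local case), relative to the claim `XT` and the super-replication
price process `Fproc`. -/
def AssumptionA4 (M : Market Ω) (s : ℝ) (XT : Ω → ℝ × ℝ) (Fproc : ℝ → Ω → ℝ) : Prop :=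
  ∃ Q0 ∈ Qset M s,
    ∀ (σ : ℕ → Ω → ℝ) (σ' : Ω → ℝ),
      (∀ n, IsStoppingTime M.F (fun ω => ((σ n ω : ℝ) : WithTop ℝ))) →
      (∀ n ω, σ n ω ∈ Icc 0 M.T) →
      (∀ n ω, σ (n + 1) ω ≤ σ n ω) →
      (∀ ω, Tendsto (fun n => σ n ω) atTop (nhds (σ' ω))) →
      ∃ pSeq : WithTop ℕ → ℕ → Measure Ω × (ℝ → Ω → ℝ),
        (∀ n k, IsCPS M M.lam 0 M.T (pSeq n k).1 (pSeq n k).2) ∧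
        (∀ ε : ℝ, 0 < ε → ∃ K : ℕ, ∀ k : ℕ, K ≤ k → ∀ n : WithTop ℕ,
          |(∫ ω, FQat M XT (pSeq n k) (sigmaHat σ σ' n) ω ∂Q0) -
            ∫ ω, Fproc (sigmaHat σ σ' n ω) ω ∂Q0| < ε) ∧
        (∀ ε : ℝ, 0 < ε → ∀ k : ℕ,
          Q0 (⋃ N : ℕ, {ω | ∀ n : ℕ, N ≤ n → ∀ n0 : WithTop ℕ,
            |FQat M XT (pSeq n0 k) (σ n) ω - FQat M XT (pSeq n0 k) σ' ω| < ε}) = 1)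

/-- The set `Z(s,T)` (membership predicate). -/
def MemZ (M : Market Ω) (s : ℝ) (Z : ℝ → Ω → ℝ × ℝ) : Prop :=
  MartingaleOn M.F M.P (fun t ω => (Z t ω).1) s M.T ∧
  MartingaleOn M.F M.P (fun t ω => (Z t ω).2) s M.T ∧
  ∀ t ∈ Icc s M.T, ∀ᵐ ω ∂M.P,
    Z t ω ∈ polarCone (solvCone M.lam (M.S t ω)) ∧ Z t ω ≠ 0

/-- The set `Z_loc(s,T)` (membership predicate). -/
def MemZloc (M : Market Ω) (s : ℝ) (Z : ℝ → Ω → ℝ × ℝ) : Prop :=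
  MartingaleOn M.F M.P (fun t ω => (Z t ω).1) s M.T ∧
  LocalMartingaleOn M.F M.P (fun t ω => (Z t ω).2) s M.T ∧
  ∀ t ∈ Icc s M.T, ∀ᵐ ω ∂M.P,
    Z t ω ∈ polarCone (solvCone M.lam (M.S t ω)) ∧ Z t ω ≠ 0

/-- The measure `Q(Z)` with density `Z¹_T / E_P[Z¹_T]` with respect to `P`. -/
def QofZ (M : Market Ω) (Z : ℝ → Ω → ℝ × ℝ) : Measure Ω :=
  M.P.withDensity fun ω => ENNReal.ofReal ((Z M.T ω).1 / ∫ ω', (Z M.T ω').1 ∂M.P)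

/-! ### Auxiliary lemmas for Statement 14 -/

lemma max_part_mono {a b u v : ℝ} (ha : 0 ≤ a) (hb : 0 ≤ b) (h : u ≤ v) :
    max u 0 * a - max (-u) 0 * b ≤ max v 0 * a - max (-v) 0 * b := by
  rcases le_total u 0 with hu | hu <;> rcases le_total v 0 with hv | hv
  · rw [max_eq_right hu, max_eq_right hv, max_eq_left (neg_nonneg.2 hu),
      max_eq_left (neg_nonneg.2 hv)]
    nlinarith [mul_le_mul_of_nonneg_right h hb]
  · rw [max_eq_right hu, max_eq_left hv, max_eq_left (neg_nonneg.2 hu),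
      max_eq_right (neg_nonpos.2 hv)]
    nlinarith [mul_nonneg hv ha, mul_nonneg (neg_nonneg.2 hu) hb]
  · have h1 : u = v := le_antisymm h (hv.trans hu)
    rw [h1]
  · rw [max_eq_left hu, max_eq_left hv, max_eq_right (neg_nonpos.2 hu),
      max_eq_right (neg_nonpos.2 hv)]
    nlinarith [mul_le_mul_of_nonneg_right h ha]

lemma liq_mono (M : Market Ω) (t : ℝ) (ω : Ω) {x y : ℝ × ℝ}
    (h1 : x.1 ≤ y.1) (h2 : x.2 ≤ y.2) : liq M t x ω ≤ liq M t y ω := by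
  have hS := M.S_pos t ω
  have ha : (0:ℝ) ≤ (1 - M.lam) * M.S t ω :=
    mul_nonneg (by linarith [M.lam_lt_one]) hS.le
  have hb : (0:ℝ) ≤ (1 + M.lam) * M.S t ω :=
    mul_nonneg (by linarith [M.lam_pos]) hS.le
  have := max_part_mono ha hb h2
  simp only [liq]
  linarith

lemma liq_zero (M : Market Ω) (t : ℝ) (ω : Ω) : liq M t 0 ω = 0 := by
  simp [liq]

lemma zero_mem_Aset (M : Market Ω) (s : ℝ) : (fun _ : Ω => (0 : ℝ × ℝ)) ∈ Aset M s := by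
  refine ⟨fun _ _ => 0, ?_, fun _ => rfl, ?_, fun _ => rfl⟩
  · refine ⟨?_, ?_, fun _ => 0, fun _ => 0, fun _ => 0, fun _ => 0,
      fun _ => inferInstance, fun _ => inferInstance, fun _ => inferInstance,
      fun _ => inferInstance, ?_, ?_⟩
    · exact measurable_const
    · exact measurable_const
    · intro ω t ht; simp
    · intro ω E hE hsub; simp
  · refine ⟨fun _ => 0, fun _ => 0, ?_, ?_, ?_⟩
    · exact ⟨⟨stronglyMeasurable_const, fun Q _ => integrable_zero _ _ _⟩,
        Filter.Eventually.of_forall fun _ => le_rfl⟩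
    · exact ⟨⟨stronglyMeasurable_const, 0, Filter.Eventually.of_forall fun _ => by simp⟩,
        Filter.Eventually.of_forall fun _ => le_rfl⟩
    · intro τ hτ hmem
      exact Filter.Eventually.of_forall fun ω => by simp [liqAtTime, liq]

lemma zero_mem_Lb0 (M : Market Ω) : (fun _ : Ω => (0 : ℝ × ℝ)) ∈ Lb0 M := by
  refine ⟨1, one_pos, Filter.Eventually.of_forall fun ω => ?_⟩
  have hS := M.S_pos M.T ω
  have h1 : ((fun _ : Ω => (0:ℝ×ℝ)) ω - (fun _ : Ω => ((-1:ℝ), (-1:ℝ))) ω) = ((1:ℝ), (1:ℝ)) := by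
    norm_num [Prod.ext_iff]
  rw [h1]
  simp only [liq]
  norm_num
  nlinarith [mul_pos (show (0:ℝ) < 1 - M.lam by linarith [M.lam_lt_one]) hS]

lemma measurableSet_Ioi_prod (F : Filtration ℝ m0) (s : ℝ) {A : Set Ω}
    (hA : MeasurableSet[F s] A) :
    MeasurableSet[MeasurableSpace.generateFrom (predictableSets F)] ((Ioi s) ×ˢ A) := by
  have h : ((Ioi s) ×ˢ A : Set (ℝ × Ω)) = ⋃ n : ℕ, (Ioc s (s + (n + 1)) ×ˢ A) := by
    ext p
    simp only [Set.mem_prod, Set.mem_iUnion, Set.mem_Ioi, Set.mem_Ioc]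
    constructor
    · rintro ⟨h1, h2⟩
      obtain ⟨n, hn⟩ := exists_nat_ge (p.1 - s)
      exact ⟨n, ⟨h1, by linarith⟩, h2⟩
    · rintro ⟨n, ⟨h1, _⟩, h2⟩
      exact ⟨h1, h2⟩
  rw [h]
  exact MeasurableSet.iUnion fun n =>
    MeasurableSpace.measurableSet_generateFrom ⟨s, s + (n + 1), A, hA, rfl⟩

open Classical in
lemma predictable_piecewise (F : Filtration ℝ m0) (s : ℝ) {A : Set Ω}
    (hA : MeasurableSet[F s] A) {f g : ℝ → Ω → ℝ}
    (hf : Predictable F f) (hg : Predictable F g) :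
    Predictable F (fun t ω => if s < t then (if ω ∈ A then f t ω else g t ω) else 0) := by
  classical
  have h1 := measurableSet_Ioi_prod F s hA
  have h2 := measurableSet_Ioi_prod F s hA.compl
  have heq : Function.uncurry (fun t ω => if s < t then (if ω ∈ A then f t ω else g t ω) else 0)
      = fun p : ℝ × Ω => if p ∈ (Ioi s) ×ˢ A then Function.uncurry f p
          else if p ∈ (Ioi s) ×ˢ Aᶜ then Function.uncurry g p else 0 := by
    funext p
    by_cases hs : s < p.1 <;> by_cases hm : p.2 ∈ A <;>
      simp [Function.uncurry, Set.mem_prod, hs, hm]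
  unfold Predictable
  rw [heq]
  exact Measurable.ite h1 hf (Measurable.ite h2 hg measurable_const)

open Classical in
lemma combine_mem (M : Market Ω) {s : ℝ} (hsT : s ≤ M.T) {η₁ η₂ : Ω → ℝ × ℝ}
    (h₁ : η₁ ∈ Aset M s ∩ Lb0 M) (h₂ : η₂ ∈ Aset M s ∩ Lb0 M)
    {A : Set Ω} (hA : MeasurableSet[M.F s] A) :
    (fun ω => if ω ∈ A then η₁ ω else η₂ ω) ∈ Aset M s ∩ Lb0 M := by
  classical
  obtain ⟨⟨φ₁, hsf₁, h0₁, hadm₁, hT₁⟩, c₁, hc₁, hb₁⟩ := h₁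
  obtain ⟨⟨φ₂, hsf₂, h0₂, hadm₂, hT₂⟩, c₂, hc₂, hb₂⟩ := h₂
  set ψ : ℝ → Ω → ℝ × ℝ :=
    fun t ω => if s < t then (if ω ∈ A then φ₁ t ω else φ₂ t ω) else 0 with hψ
  constructor
  · refine ⟨ψ, ?_, ?_, ?_, ?_⟩
    · -- self-financing
      obtain ⟨hp1₁, hp2₁, a1u, a1d, a2u, a2d, fa1u, fa1d, fa2u, fa2d, heq₁, hin₁⟩ := hsf₁
      obtain ⟨hp1₂, hp2₂, b1u, b1d, b2u, b2d, fb1u, fb1d, fb2u, fb2d, heq₂, hin₂⟩ := hsf₂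
      refine ⟨?_, ?_, fun ω => if ω ∈ A then a1u ω else b1u ω,
        fun ω => if ω ∈ A then a1d ω else b1d ω,
        fun ω => if ω ∈ A then a2u ω else b2u ω,
        fun ω => if ω ∈ A then a2d ω else b2d ω,
        ?_, ?_, ?_, ?_, ?_, ?_⟩
      · have hco : (fun t ω => (ψ t ω).1) =
            fun t ω => if s < t then (if ω ∈ A then (φ₁ t ω).1 else (φ₂ t ω).1) else 0 := by
          funext t ω
          by_cases hst : s < t <;> by_cases hm : ω ∈ A <;> simp [hψ, hst, hm]
        rw [hco]
        exact predictable_piecewise M.F s hA hp1₁ hp1₂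
      · have hco : (fun t ω => (ψ t ω).2) =
            fun t ω => if s < t then (if ω ∈ A then (φ₁ t ω).2 else (φ₂ t ω).2) else 0 := by
          funext t ω
          by_cases hst : s < t <;> by_cases hm : ω ∈ A <;> simp [hψ, hst, hm]
        rw [hco]
        exact predictable_piecewise M.F s hA hp2₁ hp2₂
      · intro ω; dsimp only; split_ifs; exacts [fa1u ω, fb1u ω]
      · intro ω; dsimp only; split_ifs; exacts [fa1d ω, fb1d ω]
      · intro ω; dsimp only; split_ifs; exacts [fa2u ω, fb2u ω]
      · intro ω; dsimp only; split_ifs; exacts [fa2d ω, fb2d ω]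
      · intro ω t ht
        have h1 := heq₁ ω t ht
        have h2 := heq₂ ω t ht
        rw [h0₁ ω] at h1
        rw [h0₂ ω] at h2
        by_cases hst : s < t
        · by_cases hm : ω ∈ A
          · simpa [hψ, hst, hm, lt_irrefl] using h1
          · simpa [hψ, hst, hm, lt_irrefl] using h2
        · have hts : t = s := le_antisymm (not_lt.1 hst) ht.1
          subst hts
          by_cases hm : ω ∈ A <;> simp [hψ, lt_irrefl, hm]
      · intro ω E hE hEs
        by_cases hm : ω ∈ A
        · simpa [hm] using hin₁ ω E hE hEs
        · simpa [hm] using hin₂ ω E hE hEs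
    · intro ω; simp [hψ]
    · -- admissibility
      obtain ⟨M11, M21, hM11, hM21, hW₁⟩ := hadm₁
      obtain ⟨M12, M22, hM12, hM22, hW₂⟩ := hadm₂
      refine ⟨fun ω => M11 ω + M12 ω, fun ω => M21 ω + M22 ω, ?_, ?_, ?_⟩
      · refine ⟨⟨hM11.1.1.add hM12.1.1, fun Q hQ => (hM11.1.2 Q hQ).add (hM12.1.2 Q hQ)⟩, ?_⟩
        filter_upwards [hM11.2, hM12.2] with ω u1 u2
        exact add_nonneg u1 u2
      · obtain ⟨⟨hm1, C1, hC1⟩, hpos1⟩ := hM21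
        obtain ⟨⟨hm2, C2, hC2⟩, hpos2⟩ := hM22
        refine ⟨⟨hm1.add hm2, C1 + C2, ?_⟩, ?_⟩
        · filter_upwards [hC1, hC2] with ω u1 u2
          exact (abs_add_le _ _).trans (add_le_add u1 u2)
        · filter_upwards [hpos1, hpos2] with ω u1 u2
          exact add_nonneg u1 u2
      · intro τ hτ hτm
        filter_upwards [hW₁ τ hτ hτm, hW₂ τ hτ hτm, hM11.2, hM12.2, hM21.2, hM22.2]
          with ω k1 k2 p1 p2 q1 q2
        have hS := (M.S_pos (τ ω) ω).le
        simp only [liqAtTime] at k1 k2 ⊢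
        have hexp : (M21 ω + M22 ω) * M.S (τ ω) ω
            = M21 ω * M.S (τ ω) ω + M22 ω * M.S (τ ω) ω := add_mul _ _ _
        by_cases hst : s < τ ω
        · by_cases hm : ω ∈ A
          · have hψτ : ψ (τ ω) ω = φ₁ (τ ω) ω := by simp [hψ, hst, hm]
            rw [hψτ]
            have hq : 0 ≤ M22 ω * M.S (τ ω) ω := mul_nonneg q2 hS
            linarith [k1]
          · have hψτ : ψ (τ ω) ω = φ₂ (τ ω) ω := by simp [hψ, hst, hm]
            rw [hψτ]
            have hq : 0 ≤ M21 ω * M.S (τ ω) ω := mul_nonneg q1 hS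
            linarith [k2]
        · have hψτ : ψ (τ ω) ω = 0 := by simp [hψ, hst]
          rw [hψτ, liq_zero]
          have hq1 : 0 ≤ M21 ω * M.S (τ ω) ω := mul_nonneg q1 hS
          have hq2 : 0 ≤ M22 ω * M.S (τ ω) ω := mul_nonneg q2 hS
          linarith
    · -- terminal value
      intro ω
      by_cases hsT' : s < M.T
      · by_cases hm : ω ∈ A <;> simp [hψ, hsT', hm, hT₁ ω, hT₂ ω]
      · have hTs : M.T = s := le_antisymm (not_lt.1 hsT') hsT
        have e1 : η₁ ω = 0 := by rw [← hT₁ ω, hTs, h0₁ ω]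
        have e2 : η₂ ω = 0 := by rw [← hT₂ ω, hTs, h0₂ ω]
        by_cases hm : ω ∈ A <;> simp [hψ, hsT', hm, e1, e2]
  · -- Lb0
    refine ⟨c₁ + c₂, by linarith, ?_⟩
    have k1 : ∀ᵐ ω ∂M.P, 0 ≤ liq M M.T (η₁ ω - (-c₁, -c₁)) ω := hb₁
    have k2 : ∀ᵐ ω ∂M.P, 0 ≤ liq M M.T (η₂ ω - (-c₂, -c₂)) ω := hb₂
    show ∀ᵐ ω ∂M.P, 0 ≤ liq M M.T
      ((fun ω => if ω ∈ A then η₁ ω else η₂ ω) ω - (-(c₁ + c₂), -(c₁ + c₂))) ω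
    filter_upwards [k1, k2] with ω e1 e2
    by_cases hm : ω ∈ A
    · simp only [hm, if_true]
      refine le_trans e1 (liq_mono M M.T ω ?_ ?_)
      · simp only [Prod.fst_sub]; norm_num; linarith
      · simp only [Prod.snd_sub]; norm_num; linarith
    · simp only [hm, if_false]
      refine le_trans e2 (liq_mono M M.T ω ?_ ?_)
      · simp only [Prod.fst_sub]; norm_num; linarith
      · simp only [Prod.snd_sub]; norm_num; linarith

lemma condexp_piece (M : Market Ω) (s : ℝ) {A : Set Ω}
    (hA : MeasurableSet[M.F s] A) {d₁ d₂ : Ω → ℝ}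
    (hi₁ : Integrable d₁ M.P) (hi₂ : Integrable d₂ M.P) :
    MeasureTheory.condExp (M.F s) M.P (fun ω => A.indicator d₁ ω + Aᶜ.indicator d₂ ω) =ᵐ[M.P]
      fun ω => A.indicator (MeasureTheory.condExp (M.F s) M.P d₁) ω
        + Aᶜ.indicator (MeasureTheory.condExp (M.F s) M.P d₂) ω := by
  have h1 : (fun ω => A.indicator d₁ ω + Aᶜ.indicator d₂ ω)
      = A.indicator d₁ + Aᶜ.indicator d₂ := rfl
  rw [h1]
  refine (condExp_add (hi₁.indicator (M.F.le s A hA))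
    (hi₂.indicator (M.F.le s Aᶜ hA.compl)) (M.F s)).trans ?_
  filter_upwards [condExp_indicator hi₁ hA, condExp_indicator hi₂ hA.compl] with ω e1 e2
  simp only [Pi.add_apply]
  rw [e1, e2]

open Classical in
lemma exists_sup (M : Market Ω) {s : ℝ} (hsT : s ≤ M.T) (Z : Ω → ℝ × ℝ)
    (η₁ η₂ : Ω → ℝ × ℝ) (h₁ : η₁ ∈ Aset M s ∩ Lb0 M) (h₂ : η₂ ∈ Aset M s ∩ Lb0 M) :
    ∃ η₃ ∈ Aset M s ∩ Lb0 M,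
      (MeasureTheory.condExp (M.F s) M.P (fun ω => dot (η₁ ω) (Z ω)) ≤ᵐ[M.P]
        MeasureTheory.condExp (M.F s) M.P (fun ω => dot (η₃ ω) (Z ω))) ∧
      (MeasureTheory.condExp (M.F s) M.P (fun ω => dot (η₂ ω) (Z ω)) ≤ᵐ[M.P]
        MeasureTheory.condExp (M.F s) M.P (fun ω => dot (η₃ ω) (Z ω))) := by
  by_cases hi₁ : Integrable (fun ω => dot (η₁ ω) (Z ω)) M.P
  · by_cases hi₂ : Integrable (fun ω => dot (η₂ ω) (Z ω)) M.P
    · -- both integrable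
      set f₁ := MeasureTheory.condExp (M.F s) M.P (fun ω => dot (η₁ ω) (Z ω)) with hf₁
      set f₂ := MeasureTheory.condExp (M.F s) M.P (fun ω => dot (η₂ ω) (Z ω)) with hf₂
      set A := {ω | f₂ ω ≤ f₁ ω} with hAdef
      have hA : MeasurableSet[M.F s] A :=
        measurableSet_le stronglyMeasurable_condExp.measurable
          stronglyMeasurable_condExp.measurable
      refine ⟨fun ω => if ω ∈ A then η₁ ω else η₂ ω, combine_mem M hsT h₁ h₂ hA, ?_⟩
      have hd3 : (fun ω => dot ((fun ω => if ω ∈ A then η₁ ω else η₂ ω) ω) (Z ω))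
          = fun ω => A.indicator (fun ω => dot (η₁ ω) (Z ω)) ω
              + Aᶜ.indicator (fun ω => dot (η₂ ω) (Z ω)) ω := by
        funext ω
        by_cases hm : ω ∈ A <;>
          simp [Set.indicator_of_mem, Set.indicator_of_notMem, hm]
      have hkey : MeasureTheory.condExp (M.F s) M.P
            (fun ω => dot ((fun ω => if ω ∈ A then η₁ ω else η₂ ω) ω) (Z ω)) =ᵐ[M.P]
          fun ω => A.indicator f₁ ω + Aᶜ.indicator f₂ ω := by
        rw [hd3]
        exact condexp_piece M s hA hi₁ hi₂
      constructor
      · filter_upwards [hkey] with ω hω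
        rw [hω]
        by_cases hm : ω ∈ A
        · simp [Set.indicator_of_mem hm, Set.indicator_of_notMem (by simpa using hm : ω ∉ Aᶜ)]
        · have hle : f₁ ω ≤ f₂ ω := le_of_not_ge hm
          simp only [Set.indicator_of_notMem hm,
            Set.indicator_of_mem (Set.mem_compl hm)]
          linarith
      · filter_upwards [hkey] with ω hω
        rw [hω]
        by_cases hm : ω ∈ A
        · have hle : f₂ ω ≤ f₁ ω := hm
          simp only [Set.indicator_of_mem hm,
            Set.indicator_of_notMem (by simpa using hm : ω ∉ Aᶜ)]
          linarith
        · simp [Set.indicator_of_notMem hm, Set.indicator_of_mem (Set.mem_compl hm)]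
    · -- only η₁ integrable
      set f₁ := MeasureTheory.condExp (M.F s) M.P (fun ω => dot (η₁ ω) (Z ω)) with hf₁
      set A := {ω | 0 ≤ f₁ ω} with hAdef
      have hA : MeasurableSet[M.F s] A :=
        measurableSet_le measurable_const stronglyMeasurable_condExp.measurable
      refine ⟨fun ω => if ω ∈ A then η₁ ω else (fun _ : Ω => (0:ℝ×ℝ)) ω,
        combine_mem M hsT h₁ ⟨zero_mem_Aset M s, zero_mem_Lb0 M⟩ hA, ?_⟩
      have hd3 : (fun ω => dot ((fun ω => if ω ∈ A then η₁ ω else (fun _ : Ω => (0:ℝ×ℝ)) ω) ω) (Z ω))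
          = A.indicator (fun ω => dot (η₁ ω) (Z ω)) := by
        funext ω
        by_cases hm : ω ∈ A <;>
          simp [Set.indicator_of_mem, Set.indicator_of_notMem, hm, dot]
      have hkey : MeasureTheory.condExp (M.F s) M.P
            (fun ω => dot ((fun ω => if ω ∈ A then η₁ ω else (fun _ : Ω => (0:ℝ×ℝ)) ω) ω) (Z ω))
          =ᵐ[M.P] A.indicator f₁ := by
        rw [hd3]
        exact condExp_indicator hi₁ hA
      have hzero : MeasureTheory.condExp (M.F s) M.P (fun ω => dot (η₂ ω) (Z ω)) = 0 :=
        condExp_of_not_integrable hi₂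
      constructor
      · filter_upwards [hkey] with ω hω
        rw [hω]
        by_cases hm : ω ∈ A
        · rw [Set.indicator_of_mem hm]
        · rw [Set.indicator_of_notMem hm]
          exact le_of_not_ge hm
      · filter_upwards [hkey] with ω hω
        rw [hzero, hω]
        by_cases hm : ω ∈ A
        · rw [Set.indicator_of_mem hm]; exact hm
        · rw [Set.indicator_of_notMem hm]; exact le_rfl
  · by_cases hi₂ : Integrable (fun ω => dot (η₂ ω) (Z ω)) M.P
    · -- only η₂ integrable
      set f₂ := MeasureTheory.condExp (M.F s) M.P (fun ω => dot (η₂ ω) (Z ω)) with hf₂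
      set A := {ω | 0 ≤ f₂ ω} with hAdef
      have hA : MeasurableSet[M.F s] A :=
        measurableSet_le measurable_const stronglyMeasurable_condExp.measurable
      refine ⟨fun ω => if ω ∈ A then η₂ ω else (fun _ : Ω => (0:ℝ×ℝ)) ω,
        combine_mem M hsT h₂ ⟨zero_mem_Aset M s, zero_mem_Lb0 M⟩ hA, ?_⟩
      have hd3 : (fun ω => dot ((fun ω => if ω ∈ A then η₂ ω else (fun _ : Ω => (0:ℝ×ℝ)) ω) ω) (Z ω))
          = A.indicator (fun ω => dot (η₂ ω) (Z ω)) := by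
        funext ω
        by_cases hm : ω ∈ A <;>
          simp [Set.indicator_of_mem, Set.indicator_of_notMem, hm, dot]
      have hkey : MeasureTheory.condExp (M.F s) M.P
            (fun ω => dot ((fun ω => if ω ∈ A then η₂ ω else (fun _ : Ω => (0:ℝ×ℝ)) ω) ω) (Z ω))
          =ᵐ[M.P] A.indicator f₂ := by
        rw [hd3]
        exact condExp_indicator hi₂ hA
      have hzero : MeasureTheory.condExp (M.F s) M.P (fun ω => dot (η₁ ω) (Z ω)) = 0 :=
        condExp_of_not_integrable hi₁
      constructor
      · filter_upwards [hkey] with ω hω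
        rw [hzero, hω]
        by_cases hm : ω ∈ A
        · rw [Set.indicator_of_mem hm]; exact hm
        · rw [Set.indicator_of_notMem hm]; exact le_rfl
      · filter_upwards [hkey] with ω hω
        rw [hω]
        by_cases hm : ω ∈ A
        · rw [Set.indicator_of_mem hm]
        · rw [Set.indicator_of_notMem hm]
          exact le_of_not_ge hm
    · -- neither integrable
      refine ⟨fun _ : Ω => (0:ℝ×ℝ), ⟨zero_mem_Aset M s, zero_mem_Lb0 M⟩, ?_⟩
      have hd0 : (fun ω => dot ((fun _ : Ω => (0:ℝ×ℝ)) ω) (Z ω)) = (0 : Ω → ℝ) := by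
        funext ω; simp [dot]
      have hz : MeasureTheory.condExp (M.F s) M.P
          (fun ω => dot ((fun _ : Ω => (0:ℝ×ℝ)) ω) (Z ω)) = 0 := by
        rw [hd0]; exact condExp_zero
      rw [hz, condExp_of_not_integrable hi₁, condExp_of_not_integrable hi₂]
      exact ⟨Filter.EventuallyLE.refl _ _, Filter.EventuallyLE.refl _ _⟩

lemma key_sup_integral (M : Market Ω) (s : ℝ) {ι : Type*} (𝒜 : Set ι) (d : ι → Ω → ℝ)
    (i₀ : ι) (hi₀ : i₀ ∈ 𝒜) (hd₀ : d i₀ = 0)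
    (hdir : ∀ i ∈ 𝒜, ∀ j ∈ 𝒜, ∃ k ∈ 𝒜,
      (MeasureTheory.condExp (M.F s) M.P (d i) ≤ᵐ[M.P]
        MeasureTheory.condExp (M.F s) M.P (d k)) ∧
      (MeasureTheory.condExp (M.F s) M.P (d j) ≤ᵐ[M.P]
        MeasureTheory.condExp (M.F s) M.P (d k)))
    (g : Ω → ℝ)
    (hg : IsEssSupOn M.P 𝒜 (fun i => MeasureTheory.condExp (M.F s) M.P (d i)) g) :
    ∫ ω, g ω ∂M.P = sSup {r : ℝ | ∃ i ∈ 𝒜, r = ∫ ω, d i ω ∂M.P} := by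
  classical
  haveI := M.probP
  haveI : IsFiniteMeasure (M.P.trim (M.F.le s)) := isFiniteMeasure_trim _
  set F : ι → Ω → ℝ := fun i => MeasureTheory.condExp (M.F s) M.P (d i) with hFdef
  have hdir' : ∀ i ∈ 𝒜, ∀ j ∈ 𝒜, ∃ k ∈ 𝒜, (F i ≤ᵐ[M.P] F k) ∧ (F j ≤ᵐ[M.P] F k) := hdir
  have hub : ∀ i ∈ 𝒜, F i ≤ᵐ[M.P] g := hg.1
  have hFint : ∀ i, Integrable (F i) M.P := fun i => integrable_condExp
  have hFmeas : ∀ i, AEMeasurable (F i) M.P := fun i =>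
    (stronglyMeasurable_condExp.mono (M.F.le s)).measurable.aemeasurable
  have hint_eq : ∀ i, ∫ ω, F i ω ∂M.P = ∫ ω, d i ω ∂M.P := by
    intro i
    exact integral_condExp (M.F.le s)
  have hF₀ : F i₀ = 0 := by simp only [hFdef]; rw [hd₀]; exact condExp_zero
  set R : Set ℝ := {r : ℝ | ∃ i ∈ 𝒜, r = ∫ ω, d i ω ∂M.P} with hRdef
  have h0R : (0:ℝ) ∈ R := ⟨i₀, hi₀, by rw [hd₀]; simp⟩
  have hRne : R.Nonempty := ⟨0, h0R⟩
  have memR : ∀ i ∈ 𝒜, (∫ ω, F i ω ∂M.P) ∈ R := fun i hi => ⟨i, hi, hint_eq i⟩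
  by_cases hbdd : BddAbove R
  · -- bounded case
    have hc0 : 0 ≤ sSup R := le_csSup hbdd h0R
    have hle_c : ∀ i ∈ 𝒜, ∫ ω, F i ω ∂M.P ≤ sSup R := fun i hi => le_csSup hbdd (memR i hi)
    obtain ⟨u, hu_mono, hu_tend, hu_mem⟩ := exists_seq_tendsto_sSup hRne hbdd
    have hu_mem' : ∀ n, ∃ i ∈ 𝒜, u n = ∫ ω, d i ω ∂M.P := hu_mem
    choose η hηA hηr using hu_mem'
    have hdirT : ∀ i j, ∃ k, i ∈ 𝒜 → j ∈ 𝒜 →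
        k ∈ 𝒜 ∧ (F i ≤ᵐ[M.P] F k) ∧ (F j ≤ᵐ[M.P] F k) := by
      intro i j
      by_cases h : i ∈ 𝒜 ∧ j ∈ 𝒜
      · obtain ⟨k, hk1, hk2, hk3⟩ := hdir' i h.1 j h.2
        exact ⟨k, fun _ _ => ⟨hk1, hk2, hk3⟩⟩
      · exact ⟨i, fun ha hb => absurd ⟨ha, hb⟩ h⟩
    choose sup hsup using hdirT
    set ζ : ℕ → ι :=
      fun n => Nat.rec (motive := fun _ => ι) (sup i₀ (η 0)) (fun n z => sup z (η (n + 1))) n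
      with hζdef
    have hζmem : ∀ n, ζ n ∈ 𝒜 := by
      intro n
      induction n with
      | zero => exact (hsup i₀ (η 0) hi₀ (hηA 0)).1
      | succ n ih => exact (hsup (ζ n) (η (n + 1)) ih (hηA (n + 1))).1
    have hζstep : ∀ n, F (ζ n) ≤ᵐ[M.P] F (ζ (n + 1)) :=
      fun n => (hsup (ζ n) (η (n + 1)) (hζmem n) (hηA (n + 1))).2.1
    have hζeta : ∀ n, F (η n) ≤ᵐ[M.P] F (ζ n) := by
      intro n
      cases n with
      | zero => exact (hsup i₀ (η 0) hi₀ (hηA 0)).2.2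
      | succ n => exact (hsup (ζ n) (η (n + 1)) (hζmem n) (hηA (n + 1))).2.2
    have hζnn : ∀ n, (0 : Ω → ℝ) ≤ᵐ[M.P] F (ζ n) := by
      intro n
      induction n with
      | zero =>
        have h' : F i₀ ≤ᵐ[M.P] F (ζ 0) := (hsup i₀ (η 0) hi₀ (hηA 0)).2.1
        rw [hF₀] at h'
        exact h'
      | succ n ih => exact ih.trans (hζstep n)
    have hae : ∀ᵐ ω ∂M.P, (∀ n, F (ζ n) ω ≤ F (ζ (n + 1)) ω) ∧
        (∀ n, F (ζ n) ω ≤ g ω) ∧ (∀ n, 0 ≤ F (ζ n) ω) := by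
      refine ((ae_all_iff.2 hζstep).and
        ((ae_all_iff.2 fun n => hub (ζ n) (hζmem n)).and (ae_all_iff.2 ?_)))
      intro n
      filter_upwards [hζnn n] with ω hω
      exact hω
    set h : Ω → ℝ := fun ω => ⨆ n, F (ζ n) ω with hhdef
    have h_tend_ae : ∀ᵐ ω ∂M.P, Tendsto (fun n => F (ζ n) ω) atTop (nhds (h ω)) := by
      filter_upwards [hae] with ω hω
      exact tendsto_atTop_ciSup (monotone_nat_of_le_succ hω.1)
        ⟨g ω, by rintro x ⟨n, rfl⟩; exact hω.2.1 n⟩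
    have h_le_g : h ≤ᵐ[M.P] g := by
      filter_upwards [hae] with ω hω
      exact ciSup_le fun n => hω.2.1 n
    have h_nn : 0 ≤ᵐ[M.P] h := by
      filter_upwards [hae] with ω hω
      exact (hω.2.2 0).trans
        (le_ciSup ⟨g ω, by rintro x ⟨n, rfl⟩; exact hω.2.1 n⟩ 0)
    have h_aemeas : AEMeasurable h M.P :=
      aemeasurable_of_tendsto_metrizable_ae atTop (fun n => hFmeas (ζ n)) h_tend_ae
    have h_an_le : ∀ n, ∫ ω, F (ζ n) ω ∂M.P ≤ sSup R := fun n => hle_c _ (hζmem n)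
    have h_un_le : ∀ n, u n ≤ ∫ ω, F (ζ n) ω ∂M.P := by
      intro n
      rw [hηr n, ← hint_eq (η n)]
      exact integral_mono_ae (hFint _) (hFint _) (hζeta n)
    have ha_tend : Tendsto (fun n => ∫ ω, F (ζ n) ω ∂M.P) atTop (nhds (sSup R)) :=
      tendsto_of_tendsto_of_tendsto_of_le_of_le hu_tend tendsto_const_nhds h_un_le h_an_le
    have hlinF : ∀ n, ∫⁻ ω, ENNReal.ofReal (F (ζ n) ω) ∂M.P
        = ENNReal.ofReal (∫ ω, F (ζ n) ω ∂M.P) :=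
      fun n => (ofReal_integral_eq_lintegral_ofReal (hFint _) (hζnn n)).symm
    have hfin : ∫⁻ ω, ENNReal.ofReal (h ω) ∂M.P = ENNReal.ofReal (sSup R) := by
      have hmono : ∀ᵐ ω ∂M.P, Monotone fun n => ENNReal.ofReal (F (ζ n) ω) := by
        filter_upwards [hae] with ω hω
        exact fun a b hab =>
          ENNReal.ofReal_le_ofReal ((monotone_nat_of_le_succ hω.1) hab)
      have hptw : ∀ᵐ ω ∂M.P, Tendsto (fun n => ENNReal.ofReal (F (ζ n) ω)) atTop
          (nhds (ENNReal.ofReal (h ω))) := by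
        filter_upwards [h_tend_ae] with ω hω
        exact ENNReal.tendsto_ofReal hω
      have hmc := lintegral_tendsto_of_tendsto_of_monotone
        (fun n => (hFmeas (ζ n)).ennreal_ofReal) hmono hptw
      refine tendsto_nhds_unique ?_ (ENNReal.tendsto_ofReal ha_tend)
      simpa only [hlinF] using hmc
    have hupper : ∀ i ∈ 𝒜, F i ≤ᵐ[M.P] h := by
      intro i hi
      have hk := fun n => hsup i (ζ n) hi (hζmem n)
      have hGint : ∀ n, Integrable (fun ω => max (F i ω) (F (ζ n) ω)) M.P := fun n =>
        (hFint i).sup (hFint (ζ n))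
      have hGle : ∀ n, ∫ ω, max (F i ω) (F (ζ n) ω) ∂M.P ≤ sSup R := by
        intro n
        refine le_trans (integral_mono_ae (hGint n) (hFint _) ?_) (hle_c _ (hk n).1)
        filter_upwards [(hk n).2.1, (hk n).2.2] with ω e1 e2
        exact max_le e1 e2
      have hint_sub : ∀ n, Integrable (fun ω => max (F i ω) (F (ζ n) ω) - F (ζ n) ω) M.P :=
        fun n => (hGint n).sub (hFint _)
      have hsub_nn : ∀ n, (0:Ω→ℝ) ≤ᵐ[M.P] fun ω => max (F i ω) (F (ζ n) ω) - F (ζ n) ω :=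
        fun n => Filter.Eventually.of_forall fun ω => sub_nonneg.2 (le_max_right _ _)
      have hbnd : ∀ n, ∫⁻ ω, ENNReal.ofReal (max (F i ω) (F (ζ n) ω) - F (ζ n) ω) ∂M.P
          ≤ ENNReal.ofReal (sSup R - ∫ ω, F (ζ n) ω ∂M.P) := by
        intro n
        rw [← ofReal_integral_eq_lintegral_ofReal (hint_sub n) (hsub_nn n)]
        refine ENNReal.ofReal_le_ofReal ?_
        rw [integral_sub (hGint n) (hFint _)]
        have := hGle n
        linarith
      have htend0 : Tendsto (fun n => ENNReal.ofReal (sSup R - ∫ ω, F (ζ n) ω ∂M.P))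
          atTop (nhds 0) := by
        have h' : Tendsto (fun n => sSup R - ∫ ω, F (ζ n) ω ∂M.P) atTop
            (nhds (sSup R - sSup R)) := tendsto_const_nhds.sub ha_tend
        rw [sub_self] at h'
        simpa using ENNReal.tendsto_ofReal h'
      have hmeas_n : ∀ n, AEMeasurable
          (fun ω => ENNReal.ofReal (max (F i ω) (F (ζ n) ω) - F (ζ n) ω)) M.P := fun n =>
        (((hFmeas i).max (hFmeas (ζ n))).sub (hFmeas (ζ n))).ennreal_ofReal
      have hzero : ∫⁻ ω, ENNReal.ofReal (max (F i ω) (h ω) - h ω) ∂M.P = 0 := by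
        have hptw : ∀ᵐ ω ∂M.P,
            Tendsto (fun n => ENNReal.ofReal (max (F i ω) (F (ζ n) ω) - F (ζ n) ω))
              atTop (nhds (ENNReal.ofReal (max (F i ω) (h ω) - h ω))) := by
          filter_upwards [h_tend_ae] with ω hω
          exact ENNReal.tendsto_ofReal ((tendsto_const_nhds.max hω).sub hω)
        have h1 : ∫⁻ ω, ENNReal.ofReal (max (F i ω) (h ω) - h ω) ∂M.P
            = ∫⁻ ω, liminf
                (fun n => ENNReal.ofReal (max (F i ω) (F (ζ n) ω) - F (ζ n) ω)) atTop ∂M.P := by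
          refine lintegral_congr_ae ?_
          filter_upwards [hptw] with ω hω
          exact hω.liminf_eq.symm
        have h2 := lintegral_liminf_le' (u := atTop) hmeas_n
        have h3 : liminf (fun n =>
              ∫⁻ ω, ENNReal.ofReal (max (F i ω) (F (ζ n) ω) - F (ζ n) ω) ∂M.P) atTop
            ≤ liminf (fun n => ENNReal.ofReal (sSup R - ∫ ω, F (ζ n) ω ∂M.P)) atTop :=
          liminf_le_liminf (Filter.Eventually.of_forall hbnd)
        have h4 : liminf (fun n => ENNReal.ofReal (sSup R - ∫ ω, F (ζ n) ω ∂M.P)) atTop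
            = 0 := htend0.liminf_eq
        refine le_antisymm ?_ zero_le
        rw [h1]
        exact h2.trans (h3.trans_eq h4)
      have hae0 := (lintegral_eq_zero_iff'
        ((((hFmeas i).max h_aemeas).sub h_aemeas).ennreal_ofReal)).1 hzero
      filter_upwards [hae0] with ω hω
      simp only [Pi.zero_apply, Pi.sub_apply] at hω
      have h6 := ENNReal.ofReal_eq_zero.1 hω
      have h5 := le_max_left (F i ω) (h ω)
      linarith
    have hgh : g =ᵐ[M.P] h := by
      have h1 := hg.2 h hupper
      filter_upwards [h1, h_le_g] with ω e1 e2
      exact le_antisymm e1 e2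
    rw [integral_congr_ae hgh,
      integral_eq_lintegral_of_nonneg_ae h_nn h_aemeas.aestronglyMeasurable, hfin,
      ENNReal.toReal_ofReal hc0]
  · -- unbounded case
    rw [Real.sSup_of_not_bddAbove hbdd]
    have hgi : ¬ Integrable g M.P := by
      intro hgi
      refine hbdd ⟨∫ ω, g ω ∂M.P, ?_⟩
      rintro r ⟨i, hi, rfl⟩
      rw [← hint_eq i]
      exact integral_mono_ae (hFint i) hgi (hub i hi)
    rw [integral_undef hgi]

/-- `E_P[esssup_η E_P[η·Z_T|F_s]] = sup_η E_P[η·Z_T]`. -/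
theorem stmt14 (M : Market Ω) (s : ℝ) (hs : s ∈ Icc 0 M.T)
    (Z : Ω → ℝ × ℝ) (hZ : MemL1Polar M Z) (g : Ω → ℝ)
    (hg : IsEssSupOn M.P (Aset M s ∩ Lb0 M)
      (fun η => MeasureTheory.condExp (M.F s) M.P (fun ω => dot (η ω) (Z ω))) g) :
    ∫ ω, g ω ∂M.P =
      sSup {r : ℝ | ∃ η ∈ Aset M s ∩ Lb0 M, r = ∫ ω, dot (η ω) (Z ω) ∂M.P} := by
  classical
  refine key_sup_integral M s (Aset M s ∩ Lb0 M) (fun η ω => dot (η ω) (Z ω))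
    (fun _ => 0) ⟨zero_mem_Aset M s, zero_mem_Lb0 M⟩ ?_ ?_ g hg
  · funext ω; simp [dot]
  · intro η₁ h₁ η₂ h₂
    exact exists_sup M hs.2 Z η₁ η₂ h₁ h₂

end TransactionCosts
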